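/- For every n ≥ 0, the sum over all Dyck paths of semilength n of the total weight of their asymmetric peaks equals the sum over all k from 0 to n of the total number of asymmetric peaks over all Dyck paths of semilength k. -/

import Mathlib

/-- Height of the vertex after the first `j` steps of the path `w`
(`true` = up-step `u`, `false` = down-step `d`). -/
def hgt (w : List Bool) (j : ℕ) : ℤ :=
  ((w.take j).count true : ℤ) - ((w.take j).count false : ℤ)

/-- `w` is a Dyck word: equally many `u`'s and `d`'s, and every prefix
has at least as many `u`'s as `d`'s. -/
def IsDyckWord (w : List Bool) : Prop :=
  w.count true = w.count false ∧ ∀ j, 0 ≤ hgt w j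

instance : DecidablePred IsDyckWord := fun w => by
  have : IsDyckWord w ↔ (w.count true = w.count false ∧
      ∀ j ∈ List.range (w.length + 1), 0 ≤ hgt w j) := by
    constructor
    · rintro ⟨h1, h2⟩; exact ⟨h1, fun j _ => h2 j⟩
    · rintro ⟨h1, h2⟩
      refine ⟨h1, fun j => ?_⟩
      rcases le_or_gt j w.length with h | h
      · exact h2 j (List.mem_range.mpr (Nat.lt_succ_of_le h))
      · have : w.take j = w := List.take_of_length_le h.le
        have hw : hgt w j = hgt w w.length := by
          unfold hgt
          rw [this, List.take_of_length_le (le_refl _)]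
        rw [hw]
        exact h2 w.length (List.mem_range.mpr (Nat.lt_succ_of_le (le_refl _)))
  exact decidable_of_iff' _ this

/-- there is a peak (an occurrence of `ud`) at positions `i, i+1`. -/
def isPeakB (w : List Bool) (i : ℕ) : Bool :=
  w.getD i false && !(w.getD (i+1) true)

/-- there is a valley (an occurrence of `du`) at positions `i, i+1`. -/
def isValleyB (w : List Bool) (i : ℕ) : Bool :=
  !(w.getD i true) && w.getD (i+1) false

/-- length of the maximal run of `u`'s ending at position `i`. -/
def upRunL (w : List Bool) (i : ℕ) : ℕ :=
  ((List.range (i+1)).takeWhile (fun k => w.getD (i-k) false)).length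

/-- length of the maximal run of `d`'s starting at position `i`. -/
def downRunR (w : List Bool) (i : ℕ) : ℕ :=
  ((List.range (w.length - i)).takeWhile (fun k => !(w.getD (i+k) true))).length

/-- length of the maximal run of `d`'s ending at position `i`. -/
def downRunL (w : List Bool) (i : ℕ) : ℕ :=
  ((List.range (i+1)).takeWhile (fun k => !(w.getD (i-k) true))).length

/-- length of the maximal run of `u`'s starting at position `i`. -/
def upRunR (w : List Bool) (i : ℕ) : ℕ :=
  ((List.range (w.length - i)).takeWhile (fun k => w.getD (i+k) false)).length

/-- The peak at `i` is symmetric: its maximal mountain `u^a d^b` has `a = b`. -/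
def isSymPeakB (w : List Bool) (i : ℕ) : Bool :=
  isPeakB w i && (upRunL w i == downRunR w (i+1))

/-- The peak at `i` is asymmetric: its maximal mountain `u^a d^b` has `a ≠ b`. -/
def isAsymPeakB (w : List Bool) (i : ℕ) : Bool :=
  isPeakB w i && !(upRunL w i == downRunR w (i+1))

/-- weight of the peak at `i`: `min a b` for its maximal mountain `u^a d^b`. -/
def peakWeight (w : List Bool) (i : ℕ) : ℕ :=
  min (upRunL w i) (downRunR w (i+1))

/-- The valley at `i` is symmetric: the maximal `d^a u^b` containing it has `a = b`. -/
def isSymValleyB (w : List Bool) (i : ℕ) : Bool :=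
  isValleyB w i && (downRunL w i == upRunR w (i+1))

/-- weight of the valley at `i`: the largest `j` with `d^j u^j` through the valley. -/
def valleyWeight (w : List Bool) (i : ℕ) : ℕ :=
  min (downRunL w i) (upRunR w (i+1))

def peakCount (w : List Bool) : ℕ := ((List.range w.length).filter (isPeakB w)).length
def spCount (w : List Bool) : ℕ := ((List.range w.length).filter (isSymPeakB w)).length
def apCount (w : List Bool) : ℕ := ((List.range w.length).filter (isAsymPeakB w)).length
def svalCount (w : List Bool) : ℕ := ((List.range w.length).filter (isSymValleyB w)).length

/-- total weight of the symmetric peaks of `w`. -/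
def spWeight (w : List Bool) : ℕ :=
  (((List.range w.length).filter (isSymPeakB w)).map (peakWeight w)).sum

/-- total weight of the asymmetric peaks of `w`. -/
def apWeight (w : List Bool) : ℕ :=
  (((List.range w.length).filter (isAsymPeakB w)).map (peakWeight w)).sum

/-- total weight of the symmetric valleys of `w`. -/
def svWeight (w : List Bool) : ℕ :=
  (((List.range w.length).filter (isSymValleyB w)).map (valleyWeight w)).sum

/-- positions of the peaks of `w`, from left to right. -/
def peakList (w : List Bool) : List ℕ := (List.range w.length).filter (isPeakB w)

/-- positions of the valleys of `w`, from left to right. -/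
def valleyList (w : List Bool) : List ℕ := (List.range w.length).filter (isValleyB w)

/-- heights of the peaks of `w`, from left to right. -/
def peakHeights (w : List Bool) : List ℤ := (peakList w).map (fun i => hgt w (i+1))

/-- heights of the valleys of `w`, from left to right. -/
def valleyHeights (w : List Bool) : List ℤ := (valleyList w).map (fun i => hgt w (i+1))

/-- number of pairs of adjacent equal entries of a list. -/
def eqAdjCount (l : List ℤ) : ℕ :=
  ((l.zip l.tail).filter (fun p => decide (p.1 = p.2))).length

/-- `sp'`: number of pairs of consecutive valleys of `w` at the same height. -/
def spPrime (w : List Bool) : ℕ := eqAdjCount (valleyHeights w)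

/-- all Bool lists of length `m`, as a Finset. -/
def boolLists (m : ℕ) : Finset (List Bool) :=
  Finset.image (fun f : Fin m → Bool => List.ofFn f) Finset.univ

/-- The (finite) set of Dyck words of semilength `n`. -/
def dyckFinset (n : ℕ) : Finset (List Bool) :=
  (boolLists (2*n)).filter (fun w => IsDyckWord w)

/-! ### Auxiliary development -/

namespace APProof

open List

lemma prefix_append_left {a b c : List Bool} (h : b <+: c) : a ++ b <+: a ++ c := by
  obtain ⟨t, rfl⟩ := h; exact ⟨t, by simp⟩

/-- balance of a word -/
def bal (l : List Bool) : ℤ := (l.count true : ℤ) - (l.count false : ℤ)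

lemma bal_append (a b : List Bool) : bal (a ++ b) = bal a + bal b := by
  simp [bal, List.count_append]; ring

lemma bal_replicate_true (p : ℕ) : bal (List.replicate p true) = p := by
  simp [bal, List.count_replicate]

lemma bal_replicate_false (p : ℕ) : bal (List.replicate p false) = -p := by
  simp [bal, List.count_replicate]

lemma hgt_eq_bal (w : List Bool) (j : ℕ) : hgt w j = bal (w.take j) := rfl

lemma isDyck_iff (w : List Bool) :
    IsDyckWord w ↔ bal w = 0 ∧ ∀ u, u <+: w → 0 ≤ bal u := by
  constructor
  · rintro ⟨h1, h2⟩
    refine ⟨by simp [bal, h1], fun u hu => ?_⟩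
    rw [List.prefix_iff_eq_take] at hu
    have := h2 u.length
    rwa [hgt_eq_bal, ← hu] at this
  · rintro ⟨h1, h2⟩
    constructor
    · have : (w.count true : ℤ) = w.count false := by unfold bal at h1; omega
      exact_mod_cast this
    · intro j
      rw [hgt_eq_bal]
      exact h2 _ (List.take_prefix _ _)

lemma prefix_append_cases {u a b : List Bool} (h : u <+: a ++ b) :
    u <+: a ∨ ∃ v, v <+: b ∧ u = a ++ v := by
  rw [List.prefix_iff_eq_take] at h
  rcases le_or_gt u.length a.length with hle | hlt
  · left
    rw [List.take_append] at h
    have h2 : u.length - a.length = 0 := by omega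
    rw [h2] at h
    simp at h
    rw [List.prefix_iff_eq_take]
    exact h
  · right
    refine ⟨b.take (u.length - a.length), List.take_prefix _ _, ?_⟩
    rw [List.take_append, List.take_of_length_le (by omega)] at h
    exact h

lemma prefix_replicate {u : List Bool} {p : ℕ} {c : Bool} (h : u <+: List.replicate p c) :
    ∃ s ≤ p, u = List.replicate s c := by
  rw [List.prefix_iff_eq_take] at h
  exact ⟨u.length ⊓ p, min_le_right _ _, h.trans List.take_replicate⟩

/-- Characterization of the Dyck property for a word with a distinguished mountain. -/
lemma isDyck_mountain (x y : List Bool) (p q : ℕ) :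
    IsDyckWord (x ++ List.replicate p true ++ List.replicate q false ++ y) ↔
      ((∀ u, u <+: x → 0 ≤ bal u) ∧ 0 ≤ bal x + p - q ∧
        (∀ v, v <+: y → 0 ≤ bal x + p - q + bal v) ∧ bal x + p - q + bal y = 0) := by
  have hbal : ∀ z : List Bool,
      bal (x ++ List.replicate p true ++ List.replicate q false ++ z)
        = bal x + p - q + bal z := by
    intro z
    rw [bal_append, bal_append, bal_append, bal_replicate_true, bal_replicate_false]
    ring
  rw [isDyck_iff]
  constructor
  · rintro ⟨h1, h2⟩
    refine ⟨fun u hu => h2 u ?_, ?_, fun v hv => ?_, ?_⟩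
    · exact hu.trans ((List.prefix_append _ _).trans ((List.prefix_append _ _).trans
        (List.prefix_append _ _)))
    · have := h2 (x ++ List.replicate p true ++ List.replicate q false)
        (List.prefix_append _ _)
      rw [bal_append, bal_append, bal_replicate_true, bal_replicate_false] at this
      linarith
    · have := h2 (x ++ List.replicate p true ++ List.replicate q false ++ v)
        (prefix_append_left hv)
      rwa [hbal v] at this
    · rw [hbal y] at h1; exact h1
  · rintro ⟨hx, hm, hy, htot⟩
    have hxbal : 0 ≤ bal x := hx x (List.prefix_refl x)
    refine ⟨by rw [hbal y]; exact htot, fun u hu => ?_⟩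
    rw [List.append_assoc, List.append_assoc] at hu
    rcases prefix_append_cases hu with h | ⟨v, hv, rfl⟩
    · exact hx _ h
    rcases prefix_append_cases hv with h | ⟨v2, hv2, rfl⟩
    · obtain ⟨s, hs, rfl⟩ := prefix_replicate h
      rw [bal_append, bal_replicate_true]
      push_cast
      omega
    rcases prefix_append_cases hv2 with h | ⟨v3, hv3, rfl⟩
    · obtain ⟨s, hs, rfl⟩ := prefix_replicate h
      rw [← List.append_assoc, bal_append, bal_append, bal_replicate_true,
        bal_replicate_false]
      push_cast
      omega
    · have := hy _ hv3
      rw [← List.append_assoc, ← List.append_assoc, bal_append, bal_append, bal_append,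
        bal_replicate_true, bal_replicate_false]
      omega

/-- The Dyck property is invariant under growing the mountain. -/
lemma isDyck_mountain_shift (x y : List Bool) (p q t : ℕ) :
    IsDyckWord (x ++ List.replicate (p+t) true ++ List.replicate (q+t) false ++ y) ↔
      IsDyckWord (x ++ List.replicate p true ++ List.replicate q false ++ y) := by
  rw [isDyck_mountain, isDyck_mountain]
  have e : (bal x + ↑(p+t) - ↑(q+t)) = bal x + p - q := by push_cast; ring
  rw [e]

end APProof
namespace APProof

lemma takeWhile_range_len (f : ℕ → Bool) :
    ∀ (m r : ℕ), r ≤ m → (∀ k < r, f k = true) → (r < m → f r = false) →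
      ((List.range m).takeWhile f).length = r := by
  intro m
  induction m generalizing f with
  | zero => intro r hr _ _; interval_cases r; simp
  | succ m ih =>
    intro r hr h1 h2
    rw [List.range_succ_eq_map, List.takeWhile_cons, List.takeWhile_map]
    cases r with
    | zero =>
      have : f 0 = false := h2 (Nat.succ_pos m)
      simp [this]
    | succ s =>
      have : f 0 = true := h1 0 (Nat.succ_pos s)
      simp only [this, if_true, List.length_cons, List.length_map]
      have := ih (f ∘ Nat.succ) s (by omega) (fun k hk => h1 (k+1) (by omega))
        (fun hs => h2 (by omega))
      simp only [Function.comp_def] at this ⊢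
      omega

lemma takeWhile_range_spec (f : ℕ → Bool) (m : ℕ) :
    let r := ((List.range m).takeWhile f).length
    r ≤ m ∧ (∀ k < r, f k = true) ∧ (r < m → f r = false) := by
  intro r
  have hpre : (List.range m).takeWhile f <+: List.range m := List.takeWhile_prefix f
  have hlen : r ≤ m := by
    have := hpre.length_le; simpa using this
  have heq : (List.range m).takeWhile f = List.range r := by
    rw [List.prefix_iff_eq_take] at hpre
    rw [hpre, List.take_range, Nat.min_eq_left hlen]
  refine ⟨hlen, fun k hk => ?_, fun hrm => ?_⟩
  · exact List.mem_takeWhile_imp (by rw [heq]; exact List.mem_range.mpr hk)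
  · by_contra hfr
    have hfr' : f r = true := by simpa using hfr
    have hall : ∀ k ∈ List.range (r+1), f k = true := by
      intro k hk
      rcases Nat.lt_or_ge k r with h | h
      · exact List.mem_takeWhile_imp (by rw [heq]; exact List.mem_range.mpr h)
      · have hkr : k = r := by
          have := List.mem_range.mp hk; omega
        rw [hkr]; exact hfr'
    have htw : ((List.range (r+1)).takeWhile f) = List.range (r+1) :=
      List.takeWhile_eq_self_iff.mpr hall
    have hsplit : List.range m = List.range (r+1) ++
        List.map (fun x => (r+1) + x) (List.range (m - (r+1))) := by
      rw [← List.range_add]; congr 1; omega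
    have : r + 1 ≤ ((List.range m).takeWhile f).length := by
      rw [hsplit, List.takeWhile_append, htw]
      simp
    omega

end APProof
namespace APProof

open List

lemma getD_lt {w : List Bool} {j : ℕ} (h : j < w.length) (d : Bool) :
    w.getD j d = w[j] := List.getD_eq_getElem w d h

lemma getD_ge {w : List Bool} {j : ℕ} (h : w.length ≤ j) (d : Bool) :
    w.getD j d = d := by
  rw [List.getD_eq_getElem?_getD, List.getElem?_eq_none h]; rfl

lemma getD_mountain (x y : List Bool) (p q : ℕ) (d : Bool) (k : ℕ) :
    (x ++ List.replicate p true ++ List.replicate q false ++ y).getD k d =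
      if k < x.length then x.getD k d
      else if k < x.length + p then true
      else if k < x.length + p + q then false
      else y.getD (k - (x.length + p + q)) d := by
  rw [List.getD_eq_getElem?_getD, List.append_assoc, List.append_assoc,
    List.getElem?_append]
  split_ifs with h1 h2 h3
  · rw [List.getD_eq_getElem?_getD]
  · have j1 : k - x.length < p := by omega
    simp [List.getElem?_append, List.getElem?_replicate, j1]
  · have j1 : ¬ (k - x.length < p) := by omega
    have j2 : k - x.length - p < q := by omega
    simp [List.getElem?_append, List.getElem?_replicate, j1, j2]
  · have j1 : ¬ (k - x.length < p) := by omega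
    have j2 : ¬ (k - x.length - p < q) := by omega
    simp only [List.getElem?_append, List.getElem?_replicate, List.length_replicate,
      if_neg j1, if_neg j2]
    have he : k - x.length - p - q = k - (x.length + p + q) := by omega
    rw [he, List.getD_eq_getElem?_getD]

lemma length_mountain (x y : List Bool) (p q : ℕ) :
    (x ++ List.replicate p true ++ List.replicate q false ++ y).length
      = x.length + p + q + y.length := by
  simp [List.length_append, List.length_replicate]; omega

/-- Recomposition: runs of a marked mountain. -/
lemma recomp (x y : List Bool) (p q : ℕ) (hp : 1 ≤ p) (hq : 1 ≤ q)
    (hx : ∀ c, x.getLast? = some c → c = false)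
    (hy : ∀ c, y.head? = some c → c = true) :
    isPeakB (x ++ List.replicate p true ++ List.replicate q false ++ y) (x.length + p - 1) = true ∧
    upRunL (x ++ List.replicate p true ++ List.replicate q false ++ y) (x.length + p - 1) = p ∧
    downRunR (x ++ List.replicate p true ++ List.replicate q false ++ y) (x.length + p) = q := by
  set w := x ++ List.replicate p true ++ List.replicate q false ++ y with hw
  have hi1 : x.length + p - 1 + 1 = x.length + p := by omega
  have hgd := getD_mountain x y p q
  have hlen : w.length = x.length + p + q + y.length := length_mountain x y p q
  have hpeak : isPeakB w (x.length + p - 1) = true := by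
    unfold isPeakB
    rw [hi1, hgd, hgd]
    rw [if_neg (by omega), if_pos (by omega)]
    rw [if_neg (by omega), if_neg (by omega), if_pos (by omega)]
    rfl
  refine ⟨hpeak, ?_, ?_⟩
  · unfold upRunL
    rw [hi1]
    apply takeWhile_range_len _ _ _ (by omega)
    · intro k hk
      rw [hgd, if_neg (by omega), if_pos (by omega)]
    · intro hpx
      have hx1 : 1 ≤ x.length := by omega
      have hne : x ≠ [] := by
        intro h; rw [h] at hx1; simp at hx1
      have hgl : x.getLast? = some false := by
        rw [List.getLast?_eq_getLast hne]
        exact congrArg some (hx _ (List.getLast?_eq_getLast hne))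
      rw [hgd, if_pos (by omega)]
      have he : x.length + p - 1 - p = x.length - 1 := by omega
      rw [he, List.getD_eq_getElem?_getD, ← List.getLast?_eq_getElem?, hgl]
      rfl
  · unfold downRunR
    have hm : w.length - (x.length + p) = q + y.length := by omega
    rw [hm]
    apply takeWhile_range_len _ _ _ (by omega)
    · intro k hk
      rw [hgd, if_neg (by omega), if_neg (by omega), if_pos (by omega)]
      rfl
    · intro hqy
      have hy1 : 1 ≤ y.length := by omega
      have hne : y ≠ [] := by
        intro h; rw [h] at hy1; simp at hy1
      have hh : y.head? = some true := by
        rw [List.head?_eq_head hne]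
        exact congrArg some (hy _ (List.head?_eq_head hne))
      rw [hgd, if_neg (by omega), if_neg (by omega), if_neg (by omega)]
      have he : x.length + p + q - (x.length + p + q) = 0 := by omega
      rw [he, List.getD_eq_getElem?_getD, ← List.head?_eq_getElem?, hh]
      rfl

end APProof
namespace APProof

open List

lemma upRunL_spec (w : List Bool) (i : ℕ) :
    upRunL w i ≤ i+1 ∧ (∀ k < upRunL w i, w.getD (i-k) false = true) ∧
      (upRunL w i < i+1 → w.getD (i - upRunL w i) false = false) := by
  have h := takeWhile_range_spec (fun k => w.getD (i-k) false) (i+1)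
  exact h

lemma downRunR_spec (w : List Bool) (j : ℕ) :
    downRunR w j ≤ w.length - j ∧ (∀ k < downRunR w j, w.getD (j+k) true = false) ∧
      (downRunR w j < w.length - j → w.getD (j + downRunR w j) true = true) := by
  have h := takeWhile_range_spec (fun k => !(w.getD (j+k) true)) (w.length - j)
  obtain ⟨h1, h2, h3⟩ := h
  refine ⟨h1, fun k hk => ?_, fun hlt => ?_⟩
  · have := h2 k hk
    rw [Bool.not_eq_true'] at this
    exact this
  · have := h3 hlt
    rw [Bool.not_eq_false'] at this
    exact this

/-- Decomposition of a word at a peak. -/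
lemma decomp (w : List Bool) (i : ℕ) (h : isPeakB w i = true) :
    ∃ x y, w = x ++ List.replicate (upRunL w i) true
        ++ List.replicate (downRunR w (i+1)) false ++ y ∧
      x.length = i + 1 - upRunL w i ∧ 1 ≤ upRunL w i ∧ 1 ≤ downRunR w (i+1) ∧
      upRunL w i ≤ i + 1 ∧ i + 1 + downRunR w (i+1) ≤ w.length ∧
      (∀ c, x.getLast? = some c → c = false) ∧ (∀ c, y.head? = some c → c = true) := by
  unfold isPeakB at h
  rw [Bool.and_eq_true, Bool.not_eq_true'] at h
  obtain ⟨hu, hd⟩ := h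
  have hi : i < w.length := by
    by_contra hc
    rw [getD_ge (by omega)] at hu
    exact absurd hu (by simp)
  have hi1 : i + 1 < w.length := by
    by_contra hc
    rw [getD_ge (by omega)] at hd
    exact absurd hd (by simp)
  obtain ⟨ha1, ha2, ha3⟩ := upRunL_spec w i
  obtain ⟨hb1, hb2, hb3⟩ := downRunR_spec w (i+1)
  set a := upRunL w i with ha
  set b := downRunR w (i+1) with hb
  have hage : 1 ≤ a := by
    by_contra hc
    have h0 : a = 0 := by omega
    have := ha3 (by omega)
    rw [h0] at this
    simp only [Nat.sub_zero] at this
    rw [hu] at this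
    exact absurd this (by simp)
  have hbge : 1 ≤ b := by
    by_contra hc
    have h0 : b = 0 := by omega
    have := hb3 (by omega)
    rw [h0] at this
    simp only [Nat.add_zero] at this
    rw [hd] at this
    exact absurd this (by simp)
  have hblen : i + 1 + b ≤ w.length := by omega
  refine ⟨w.take (i+1-a), w.drop (i+1+b), ?_, ?_, hage, hbge, ha1, hblen, ?_, ?_⟩
  · -- the decomposition equation
    have hsplit2 : w.drop (i+1-a) =
        (w.drop (i+1-a)).take (a+b) ++ w.drop (i+1+b) := by
      have hdd : (w.drop (i+1-a)).drop (a+b) = w.drop (i+1+b) := by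
        rw [List.drop_drop]
        congr 1
        omega
      rw [← hdd, List.take_append_drop]
    have hmid : (w.drop (i+1-a)).take (a+b)
        = List.replicate a true ++ List.replicate b false := by
      apply List.ext_getElem
      · simp only [List.length_take, List.length_drop, List.length_append,
          List.length_replicate]
        omega
      · intro k h1 h2
        have hk : k < a + b := by
          simp only [List.length_take, List.length_drop] at h1
          omega
        rw [List.getElem_take, List.getElem_drop]
        rw [List.getElem_append]
        by_cases hka : k < a
        · rw [dif_pos (by simpa using hka)]
          rw [List.getElem_replicate]
          have hval := ha2 (a - 1 - k) (by omega)
          have he : i - (a - 1 - k) = i + 1 - a + k := by omega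
          rw [he] at hval
          rw [getD_lt (by omega)] at hval
          exact hval
        · rw [dif_neg (by simpa using hka)]
          rw [List.getElem_replicate]
          have hval := hb2 (k - a) (by omega)
          have he : i + 1 + (k - a) = i + 1 - a + k := by omega
          rw [he] at hval
          rw [getD_lt (by omega)] at hval
          exact hval
    calc w = w.take (i+1-a) ++ w.drop (i+1-a) := (List.take_append_drop _ _).symm
      _ = w.take (i+1-a) ++ ((w.drop (i+1-a)).take (a+b) ++ w.drop (i+1+b)) := by
            rw [← hsplit2]
      _ = w.take (i+1-a) ++ (List.replicate a true ++ (List.replicate b false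
            ++ w.drop (i+1+b))) := by rw [hmid, List.append_assoc]
      _ = _ := by rw [← List.append_assoc, ← List.append_assoc]
  · simp only [List.length_take]
    omega
  · -- last of x is false
    intro c hc
    have hxlen : (w.take (i+1-a)).length = i+1-a := by
      simp only [List.length_take]; omega
    have hpos : 1 ≤ i + 1 - a := by
      by_contra hc2
      have h0 : i + 1 - a = 0 := by omega
      rw [List.getLast?_eq_getElem?, hxlen, h0] at hc
      simp at hc
    have halt : a < i + 1 := by omega
    have hval := ha3 halt
    rw [getD_lt (by omega)] at hval
    have h2 : (w.take (i+1-a)).getLast? = w[i-a]? := by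
      rw [List.getLast?_eq_getElem?, hxlen]
      have : (w.take (i+1-a))[i+1-a-1]? = w[i+1-a-1]? := by
        rw [List.getElem?_eq_getElem (by omega), List.getElem?_eq_getElem (by omega)]
        rw [Option.some_inj]
        exact List.getElem_take
      rw [this]
      congr 1
      omega
    rw [h2, List.getElem?_eq_getElem (by omega), Option.some_inj] at hc
    rw [← hc]
    exact hval
  · -- head of y is true
    intro c hc
    rw [List.head?_drop] at hc
    have hran : i + 1 + b < w.length := by
      by_contra hc2
      rw [List.getElem?_eq_none (by omega)] at hc
      exact absurd hc (by simp)
    have hval := hb3 (by omega)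
    rw [getD_lt (by omega)] at hval
    rw [List.getElem?_eq_getElem hran, Option.some_inj] at hc
    rw [← hc]
    exact hval

end APProof
namespace APProof

open List

lemma mem_boolLists {w : List Bool} {m : ℕ} : w ∈ boolLists m ↔ w.length = m := by
  unfold boolLists
  rw [Finset.mem_image]
  constructor
  · rintro ⟨f, _, rfl⟩
    simp
  · intro h
    subst h
    exact ⟨w.get, Finset.mem_univ _, List.ofFn_get w⟩

lemma mem_dyckFinset {w : List Bool} {n : ℕ} :
    w ∈ dyckFinset n ↔ w.length = 2*n ∧ IsDyckWord w := by
  unfold dyckFinset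
  rw [Finset.mem_filter, mem_boolLists]

lemma list_filter_map_sum (m : ℕ) (f : ℕ → Bool) (g : ℕ → ℕ) :
    (((List.range m).filter f).map g).sum
      = ∑ i ∈ (Finset.range m).filter (fun i => f i = true), g i := by
  rw [Finset.sum_filter]
  induction m with
  | zero => simp
  | succ m ih =>
    rw [List.range_succ, List.filter_append, List.map_append, List.sum_append,
      Finset.sum_range_succ, ih]
    by_cases h : f m = true
    · simp only [List.filter_cons, List.filter_nil, h, if_true, List.map_cons,
        List.map_nil, List.sum_cons, List.sum_nil]
      omega
    · simp only [List.filter_cons, List.filter_nil, h, if_false, List.map_nil,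
        List.sum_nil, Bool.false_eq_true]

lemma list_filter_length (m : ℕ) (f : ℕ → Bool) :
    ((List.range m).filter f).length
      = ∑ i ∈ (Finset.range m).filter (fun i => f i = true), 1 := by
  have key : ∀ l : List ℕ, (l.map (fun _ => (1:ℕ))).sum = l.length := by
    intro l
    induction l with
    | nil => rfl
    | cons a l ih => simp only [List.map_cons, List.sum_cons, List.length_cons, ih]; omega
  rw [← key, list_filter_map_sum]

/-- the set of pairs (Dyck word of semilength n, asymmetric-peak position) -/
def APset (n : ℕ) : Finset (List Bool × ℕ) :=
  ((dyckFinset n) ×ˢ Finset.range (2*n)).filter (fun p => isAsymPeakB p.1 p.2 = true)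

lemma sum_apWeight_eq (n : ℕ) :
    ∑ w ∈ dyckFinset n, apWeight w = ∑ p ∈ APset n, peakWeight p.1 p.2 := by
  unfold APset
  rw [Finset.sum_filter, Finset.sum_product]
  apply Finset.sum_congr rfl
  intro w hw
  have hlen : w.length = 2*n := (mem_dyckFinset.mp hw).1
  unfold apWeight
  rw [hlen, list_filter_map_sum, Finset.sum_filter]

lemma sum_apCount_eq (n : ℕ) :
    ∑ w ∈ dyckFinset n, apCount w = (APset n).card := by
  unfold APset
  rw [Finset.card_eq_sum_ones, Finset.sum_filter, Finset.sum_product]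
  apply Finset.sum_congr rfl
  intro w hw
  have hlen : w.length = 2*n := (mem_dyckFinset.mp hw).1
  unfold apCount
  rw [hlen, list_filter_length, Finset.sum_filter]

lemma mem_APset {n : ℕ} {w : List Bool} {i : ℕ} :
    (w, i) ∈ APset n ↔ (w.length = 2*n ∧ IsDyckWord w ∧ i < 2*n ∧ isAsymPeakB w i = true) := by
  unfold APset
  rw [Finset.mem_filter, Finset.mem_product, mem_dyckFinset, Finset.mem_range]
  tauto

lemma take_mountain (x y : List Bool) (a b s : ℕ) (hs : s ≤ a) :
    (x ++ List.replicate a true ++ List.replicate b false ++ y).take (x.length + s)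
      = x ++ List.replicate s true := by
  rw [List.append_assoc, List.append_assoc, List.take_append,
    List.take_of_length_le (by omega), List.take_append,
    List.take_replicate]
  have h3 : x.length + s - x.length - (List.replicate a true).length = 0 := by
    simp only [List.length_replicate]; omega
  have h1 : x.length + s - x.length = s := by omega
  have h2 : s ⊓ a = s := by omega
  rw [h3, List.take_zero, List.append_nil, h1, h2]

lemma drop_mountain (x y : List Bool) (a b t : ℕ) (ht : t ≤ b) :
    (x ++ List.replicate a true ++ List.replicate b false ++ y).drop (x.length + a + t)
      = List.replicate (b - t) false ++ y := by
  rw [List.append_assoc, List.append_assoc, List.drop_append,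
    List.drop_eq_nil_of_le (by omega), List.drop_append,
    List.drop_eq_nil_of_le (by simp only [List.length_replicate]; omega),
    List.drop_append, List.drop_replicate]
  simp only [List.length_replicate, List.nil_append]
  have h2 : x.length + a + t - x.length - a - b = 0 := by omega
  have h1 : x.length + a + t - x.length - a = t := by omega
  rw [h2, List.drop_zero, h1]

end APProof
namespace APProof

open List

/-- delete `t` u's and `t` d's at the apex `i` -/
def shrinkP (t : ℕ) (p : List Bool × ℕ) : List Bool × ℕ :=
  (p.1.take (p.2+1-t) ++ p.1.drop (p.2+1+t), p.2 - t)

/-- insert `t` u's and `t` d's at the apex `i` -/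
def growP (t : ℕ) (p : List Bool × ℕ) : List Bool × ℕ :=
  (p.1.take (p.2+1) ++ List.replicate t true ++ List.replicate t false
      ++ p.1.drop (p.2+1), p.2 + t)

lemma asym_iff {w : List Bool} {i : ℕ} :
    isAsymPeakB w i = true ↔ isPeakB w i = true ∧ upRunL w i ≠ downRunR w (i+1) := by
  unfold isAsymPeakB
  rw [Bool.and_eq_true, Bool.not_eq_true', beq_eq_false_iff_ne]

lemma APset_decomp {n : ℕ} {w : List Bool} {i : ℕ} (h : (w,i) ∈ APset n) :
    ∃ x y a b, w = x ++ List.replicate a true ++ List.replicate b false ++ y ∧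
      x.length = i + 1 - a ∧ i = x.length + a - 1 ∧
      1 ≤ a ∧ 1 ≤ b ∧ a ≠ b ∧ upRunL w i = a ∧ downRunR w (i+1) = b ∧
      peakWeight w i = min a b ∧ w.length = 2*n ∧ IsDyckWord w ∧
      (∀ c, x.getLast? = some c → c = false) ∧ (∀ c, y.head? = some c → c = true) := by
  obtain ⟨hlen, hD, hi, hasym⟩ := mem_APset.mp h
  obtain ⟨hpk, hne⟩ := asym_iff.mp hasym
  obtain ⟨x, y, hdec, hxlen, ha1, hb1, ha2, hb2, hx, hy⟩ := decomp w i hpk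
  exact ⟨x, y, upRunL w i, downRunR w (i+1), hdec, hxlen, by omega, ha1, hb1, hne,
    rfl, rfl, rfl, hlen, hD, hx, hy⟩

lemma peakWeight_pos {n : ℕ} {w : List Bool} {i : ℕ} (h : (w,i) ∈ APset n) :
    1 ≤ peakWeight w i := by
  obtain ⟨x, y, a, b, _, _, _, ha, hb, _, _, _, hm, _⟩ := APset_decomp h
  omega

lemma mountain_mem_APset {n : ℕ} (x y : List Bool) (a b : ℕ)
    (ha : 1 ≤ a) (hb : 1 ≤ b) (hab : a ≠ b)
    (hx : ∀ c, x.getLast? = some c → c = false) (hy : ∀ c, y.head? = some c → c = true)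
    (hD : IsDyckWord (x ++ List.replicate a true ++ List.replicate b false ++ y))
    (hlen : x.length + a + b + y.length = 2*n) :
    (x ++ List.replicate a true ++ List.replicate b false ++ y, x.length + a - 1) ∈ APset n
      ∧ peakWeight (x ++ List.replicate a true ++ List.replicate b false ++ y)
          (x.length + a - 1) = min a b := by
  obtain ⟨hpk, hur, hdr⟩ := recomp x y a b ha hb hx hy
  have hwlen := length_mountain x y a b
  have hi1 : x.length + a - 1 + 1 = x.length + a := by omega
  constructor
  · rw [mem_APset]
    refine ⟨by omega, hD, by omega, ?_⟩
    rw [asym_iff]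
    refine ⟨hpk, ?_⟩
    rw [hi1, hur, hdr]
    exact hab
  · unfold peakWeight
    rw [hi1, hur, hdr]

lemma shrink_spec {n : ℕ} {w : List Bool} {i : ℕ} (hw : (w,i) ∈ APset n)
    {t : ℕ} (ht : t < peakWeight w i) :
    shrinkP t (w,i) ∈ APset (n - t) ∧ t ≤ n ∧
    peakWeight (shrinkP t (w,i)).1 (shrinkP t (w,i)).2 = peakWeight w i - t ∧
    growP t (shrinkP t (w,i)) = (w,i) := by
  obtain ⟨x, y, a, b, hdec, hxlen, hieq, ha, hb, hab, hur, hdr, hm, hlen, hD, hx, hy⟩ :=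
    APset_decomp hw
  have hwlen : w.length = x.length + a + b + y.length := by rw [hdec]; exact length_mountain x y a b
  have hta : t < a := by omega
  have htb : t < b := by omega
  have htn : t ≤ n := by omega
  -- compute the two pieces
  have e1 : i + 1 - t = x.length + (a - t) := by omega
  have e2 : i + 1 + t = x.length + a + t := by omega
  have h1 : w.take (i+1-t) = x ++ List.replicate (a-t) true := by
    rw [e1, hdec]; exact take_mountain x y a b (a-t) (by omega)
  have h2 : w.drop (i+1+t) = List.replicate (b-t) false ++ y := by
    rw [e2, hdec]; exact drop_mountain x y a b t (by omega)
  have hw' : (shrinkP t (w,i)).1 = x ++ List.replicate (a-t) true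
      ++ List.replicate (b-t) false ++ y := by
    show w.take (i+1-t) ++ w.drop (i+1+t) = _
    rw [h1, h2, List.append_assoc, List.append_assoc, List.append_assoc]
  have hi' : (shrinkP t (w,i)).2 = x.length + (a-t) - 1 := by
    show i - t = _
    omega
  have hD' : IsDyckWord (x ++ List.replicate (a-t) true ++ List.replicate (b-t) false ++ y) := by
    rw [← isDyck_mountain_shift x y (a-t) (b-t) t]
    have e3 : a - t + t = a := by omega
    have e4 : b - t + t = b := by omega
    rw [e3, e4, ← hdec]
    exact hD
  have hmem := mountain_mem_APset (n := n - t) x y (a-t) (b-t) (by omega) (by omega)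
    (by omega) hx hy hD' (by omega)
  refine ⟨?_, htn, ?_, ?_⟩
  · have : shrinkP t (w,i) = (x ++ List.replicate (a-t) true
        ++ List.replicate (b-t) false ++ y, x.length + (a-t) - 1) := by
      rw [Prod.ext_iff]; exact ⟨hw', hi'⟩
    rw [this]
    exact hmem.1
  · rw [hw', hi', hmem.2, hm]
    omega
  · -- grow back
    have hg1 : (shrinkP t (w,i)).1.take ((shrinkP t (w,i)).2 + 1)
        = x ++ List.replicate (a-t) true := by
      rw [hw', hi', show x.length + (a-t) - 1 + 1 = x.length + (a-t) by omega]
      exact take_mountain x y (a-t) (b-t) (a-t) (le_refl _)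
    have hg2 : (shrinkP t (w,i)).1.drop ((shrinkP t (w,i)).2 + 1)
        = List.replicate (b-t) false ++ y := by
      rw [hw', hi', show x.length + (a-t) - 1 + 1 = x.length + (a-t) + 0 by omega]
      have := drop_mountain x y (a-t) (b-t) 0 (by omega)
      simpa using this
    rw [Prod.ext_iff]
    constructor
    · show (shrinkP t (w,i)).1.take ((shrinkP t (w,i)).2 + 1) ++ List.replicate t true
        ++ List.replicate t false ++ (shrinkP t (w,i)).1.drop ((shrinkP t (w,i)).2 + 1) = w
      rw [hg1, hg2, hdec]
      simp only [List.append_assoc]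
      rw [← List.append_assoc (List.replicate (a-t) true), ← List.replicate_add,
        show a - t + t = a by omega]
      rw [← List.append_assoc (List.replicate t false), ← List.replicate_add,
        show t + (b - t) = b by omega]
    · show (shrinkP t (w,i)).2 + t = i
      rw [hi']
      omega

lemma grow_spec {k : ℕ} {w : List Bool} {i : ℕ} (hw : (w,i) ∈ APset k) (t : ℕ) :
    growP t (w,i) ∈ APset (k + t) ∧
    peakWeight (growP t (w,i)).1 (growP t (w,i)).2 = peakWeight w i + t ∧
    shrinkP t (growP t (w,i)) = (w,i) := by
  obtain ⟨x, y, a, b, hdec, hxlen, hieq, ha, hb, hab, hur, hdr, hm, hlen, hD, hx, hy⟩ :=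
    APset_decomp hw
  have hwlen : w.length = x.length + a + b + y.length := by rw [hdec]; exact length_mountain x y a b
  have h1 : w.take (i+1) = x ++ List.replicate a true := by
    rw [show i + 1 = x.length + a by omega, hdec]
    exact take_mountain x y a b a (le_refl _)
  have h2 : w.drop (i+1) = List.replicate b false ++ y := by
    rw [show i + 1 = x.length + a + 0 by omega, hdec]
    have := drop_mountain x y a b 0 (by omega)
    simpa using this
  have hw' : (growP t (w,i)).1 = x ++ List.replicate (a+t) true
      ++ List.replicate (b+t) false ++ y := by
    show w.take (i+1) ++ List.replicate t true ++ List.replicate t false ++ w.drop (i+1) = _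
    rw [h1, h2]
    simp only [List.append_assoc]
    rw [← List.append_assoc (List.replicate a true), ← List.replicate_add]
    rw [← List.append_assoc (List.replicate t false), ← List.replicate_add,
      show t + b = b + t by omega]
  have hi' : (growP t (w,i)).2 = x.length + (a+t) - 1 := by
    show i + t = _
    omega
  have hD' : IsDyckWord (x ++ List.replicate (a+t) true ++ List.replicate (b+t) false ++ y) := by
    rw [isDyck_mountain_shift x y a b t, ← hdec]
    exact hD
  have hmem := mountain_mem_APset (n := k + t) x y (a+t) (b+t) (by omega) (by omega)
    (by omega) hx hy hD' (by omega)
  refine ⟨?_, ?_, ?_⟩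
  · have : growP t (w,i) = (x ++ List.replicate (a+t) true
        ++ List.replicate (b+t) false ++ y, x.length + (a+t) - 1) := by
      rw [Prod.ext_iff]; exact ⟨hw', hi'⟩
    rw [this]
    exact hmem.1
  · rw [hw', hi', hmem.2, hm]
    omega
  · -- shrink back
    have hg1 : (growP t (w,i)).1.take ((growP t (w,i)).2 + 1 - t)
        = x ++ List.replicate a true := by
      rw [hw', hi', show x.length + (a+t) - 1 + 1 - t = x.length + a by omega]
      exact take_mountain x y (a+t) (b+t) a (by omega)
    have hg2 : (growP t (w,i)).1.drop ((growP t (w,i)).2 + 1 + t)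
        = List.replicate b false ++ y := by
      rw [hw', hi', show x.length + (a+t) - 1 + 1 + t = x.length + (a+t) + t by omega]
      have := drop_mountain x y (a+t) (b+t) t (by omega)
      rw [show b + t - t = b by omega] at this
      exact this
    rw [Prod.ext_iff]
    constructor
    · show (growP t (w,i)).1.take ((growP t (w,i)).2 + 1 - t)
        ++ (growP t (w,i)).1.drop ((growP t (w,i)).2 + 1 + t) = w
      rw [hg1, hg2, hdec]
      simp only [List.append_assoc]
    · show (growP t (w,i)).2 - t = i
      rw [hi']
      omega

end APProof
namespace APProof

open List

lemma card_eq (n : ℕ) :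
    ∑ p ∈ APset n, peakWeight p.1 p.2 = ∑ k ∈ Finset.range (n+1), (APset k).card := by
  have hL : ∑ p ∈ APset n, peakWeight p.1 p.2
      = ((APset n).sigma (fun p => Finset.Icc 1 (peakWeight p.1 p.2))).card := by
    rw [Finset.card_sigma]
    apply Finset.sum_congr rfl
    intro p _
    rw [Nat.card_Icc]
    omega
  have hR : ∑ k ∈ Finset.range (n+1), (APset k).card
      = ((Finset.range (n+1)).sigma (fun k => APset k)).card := by
    rw [Finset.card_sigma]
  rw [hL, hR]
  refine Finset.card_bij'
    (fun z _ => ⟨n - (peakWeight z.1.1 z.1.2 - z.2), shrinkP (peakWeight z.1.1 z.1.2 - z.2) z.1⟩)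
    (fun z _ => ⟨growP (n - z.1) z.2, peakWeight z.2.1 z.2.2⟩) ?_ ?_ ?_ ?_
  · -- forward map lands in Rset
    rintro ⟨⟨w, i⟩, j⟩ hz
    rw [Finset.mem_sigma] at hz
    obtain ⟨hp, hj⟩ := hz
    rw [Finset.mem_Icc] at hj
    have hj' : 1 ≤ j ∧ j ≤ peakWeight w i := hj
    have ht : peakWeight w i - j < peakWeight w i := by omega
    obtain ⟨hmem, htn, _, _⟩ := shrink_spec hp ht
    refine Finset.mem_sigma.mpr ⟨?_, ?_⟩
    · show n - (peakWeight w i - j) ∈ Finset.range (n+1)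
      exact Finset.mem_range.mpr (by omega)
    · show shrinkP (peakWeight w i - j) (w, i) ∈ APset (n - (peakWeight w i - j))
      exact hmem
  · -- backward map lands in Lset
    rintro ⟨k, ⟨w, i⟩⟩ hz
    rw [Finset.mem_sigma] at hz
    obtain ⟨hk, hp⟩ := hz
    rw [Finset.mem_range] at hk
    have hk' : k < n + 1 := hk
    obtain ⟨hmem, hpw, _⟩ := grow_spec hp (n - k)
    have hmem' : growP (n - k) (w, i) ∈ APset (k + (n - k)) := hmem
    rw [show k + (n - k) = n by omega] at hmem'
    refine Finset.mem_sigma.mpr ⟨?_, ?_⟩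
    · show growP (n - k) (w, i) ∈ APset n
      exact hmem'
    · show peakWeight w i ∈ Finset.Icc 1
        (peakWeight (growP (n - k) (w, i)).1 (growP (n - k) (w, i)).2)
      rw [Finset.mem_Icc, hpw]
      have := peakWeight_pos (n := k) (w := w) (i := i) hp
      exact ⟨this, by omega⟩
  · -- left inverse
    rintro ⟨⟨w, i⟩, j⟩ hz
    rw [Finset.mem_sigma] at hz
    obtain ⟨hp, hj⟩ := hz
    rw [Finset.mem_Icc] at hj
    have hj' : 1 ≤ j ∧ j ≤ peakWeight w i := hj
    have ht : peakWeight w i - j < peakWeight w i := by omega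
    obtain ⟨hmem, htn, hpw, hback⟩ := shrink_spec hp ht
    show (⟨growP (n - (n - (peakWeight w i - j))) (shrinkP (peakWeight w i - j) (w, i)),
        peakWeight (shrinkP (peakWeight w i - j) (w, i)).1
          (shrinkP (peakWeight w i - j) (w, i)).2⟩ :
        (_ : List Bool × ℕ) × ℕ) = ⟨(w, i), j⟩
    rw [show n - (n - (peakWeight w i - j)) = peakWeight w i - j by omega, hback]
    have hj2 : peakWeight (shrinkP (peakWeight w i - j) (w, i)).1
        (shrinkP (peakWeight w i - j) (w, i)).2 = j := by rw [hpw]; omega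
    rw [hj2]
  · -- right inverse
    rintro ⟨k, ⟨w, i⟩⟩ hz
    rw [Finset.mem_sigma] at hz
    obtain ⟨hk, hp⟩ := hz
    rw [Finset.mem_range] at hk
    have hk' : k < n + 1 := hk
    obtain ⟨hmem, hpw, hback⟩ := grow_spec hp (n - k)
    show (⟨n - (peakWeight (growP (n - k) (w, i)).1 (growP (n - k) (w, i)).2
          - peakWeight w i),
        shrinkP (peakWeight (growP (n - k) (w, i)).1 (growP (n - k) (w, i)).2
          - peakWeight w i) (growP (n - k) (w, i))⟩ :
        (_ : ℕ) × (List Bool × ℕ)) = ⟨k, (w, i)⟩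
    rw [show peakWeight (growP (n - k) (w, i)).1 (growP (n - k) (w, i)).2 - peakWeight w i
        = n - k by rw [hpw]; omega, hback]
    rw [show n - (n - k) = k by omega]

end APProof
/-- For every `n`, the sum over all Dyck paths of semilength `n`
of the total weight of their asymmetric peaks equals the sum over `0 ≤ k ≤ n` of
the total number of asymmetric peaks over all Dyck paths of semilength `k`. -/
theorem total_apWeight_eq_partial_sums_ap (n : ℕ) :
    ∑ w ∈ dyckFinset n, apWeight w =
      ∑ k ∈ Finset.range (n + 1), ∑ w ∈ dyckFinset k, apCount w := by
  rw [APProof.sum_apWeight_eq, APProof.card_eq]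
  exact Finset.sum_congr rfl (fun k _ => (APProof.sum_apCount_eq k).symm)
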